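/- Under the same dynamics ẋᵢ = −(1 − xᵢ)xᵢ + ∑ⱼ cⱼᵢ(t)(1 − xⱼ)xⱼ with C(t) doubly stochastic and x(t₀) ∈ Δₙ, the function h(t) = maxᵢ xᵢ(t) is nonincreasing and the function l(t) = minᵢ xᵢ(t) is nondecreasing in t. -/

import Mathlib

open Filter Set Topology

noncomputable def bar (ε A s u : ℝ) : ℝ := ε * Real.exp (A * (u - s))

lemma bar_pos {ε : ℝ} (A s u : ℝ) (hε : 0 < ε) : 0 < bar ε A s u :=
  mul_pos hε (Real.exp_pos _)

lemma bar_deriv (ε A s u : ℝ) : HasDerivAt (fun v => bar ε A s v) (A * bar ε A s u) u := by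
  have h1 : HasDerivAt (fun v : ℝ => A * (v - s)) A u := by
    simpa using ((hasDerivAt_id u).sub_const s).const_mul A
  have h2 := h1.exp.const_mul ε
  refine HasDerivAt.congr_deriv h2 ?_
  simp only [bar]; ring

lemma bar_cont (ε A s : ℝ) : Continuous (fun u => bar ε A s u) := by
  unfold bar; fun_prop

lemma bar_mono {ε A s u v : ℝ} (hε : 0 < ε) (hA : 0 ≤ A) (huv : u ≤ v) :
    bar ε A s u ≤ bar ε A s v := by
  unfold bar
  refine mul_le_mul_of_nonneg_left ?_ hε.le
  exact Real.exp_le_exp.mpr (by nlinarith)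

lemma aux_right_neg {f : ℝ → ℝ} {a d : ℝ} (hf : HasDerivAt f d a) (hd : d < 0)
    (h0 : f a = 0) : ∀ᶠ u in 𝓝[>] a, f u < 0 := by
  have h := hasDerivAt_iff_tendsto_slope.mp hf
  have h2 : ∀ᶠ u in 𝓝[≠] a, slope f a u < 0 := h.eventually_lt_const hd
  have h3 : 𝓝[>] a ≤ 𝓝[≠] a := nhdsWithin_mono a fun x hx => (ne_of_gt hx : x ≠ a)
  filter_upwards [h3 h2, self_mem_nhdsWithin] with u hu hua
  rw [slope_def_field, h0, sub_zero] at hu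
  have hua' : 0 < u - a := sub_pos.mpr hua
  by_contra hcon
  push_neg at hcon
  exact absurd (div_nonneg hcon hua'.le) (not_le.mpr hu)

lemma aux_sum_bound (n : ℕ) (x : Fin n → ℝ) (l' b1 : ℝ) (hl0 : 0 ≤ l')
    (hbt1 : 0 < b1) (hsum1 : ∑ k, x k = 1)
    (hbd : ∀ j, l' - b1 ≤ x j) :
    ∀ i j : Fin n, j ≠ i → x j ≤ 1 - x i + n * b1 := by
  intro i j hij
  have himem : i ∈ Finset.univ.erase j := Finset.mem_erase.mpr ⟨hij.symm, Finset.mem_univ i⟩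
  have h1 : x i + ∑ k ∈ (Finset.univ.erase j).erase i, x k
      = ∑ k ∈ Finset.univ.erase j, x k := Finset.add_sum_erase _ _ himem
  have h2 : ∑ k ∈ Finset.univ.erase j, x k = 1 - x j := by
    rw [Finset.sum_erase_eq_sub (Finset.mem_univ j), hsum1]
  have h4 : ((((Finset.univ.erase j).erase i).card : ℝ)) * (l' - b1)
      ≤ ∑ k ∈ (Finset.univ.erase j).erase i, x k := by
    have := Finset.card_nsmul_le_sum ((Finset.univ.erase j).erase i)
      (fun k => x k) (l' - b1) (fun k _ => hbd k)
    simpa [nsmul_eq_mul] using this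
  have hcard : ((((Finset.univ.erase j).erase i).card : ℝ)) ≤ n := by
    have h5 : ((Finset.univ.erase j).erase i).card ≤ (Finset.univ : Finset (Fin n)).card :=
      Finset.card_le_card (fun k hk => Finset.mem_univ k)
    rw [Finset.card_univ, Fintype.card_fin] at h5
    exact_mod_cast h5
  have hcard0 : (0:ℝ) ≤ (((Finset.univ.erase j).erase i).card : ℝ) := by positivity
  nlinarith [mul_nonneg hcard0 hl0, mul_le_mul_of_nonneg_right hcard hbt1.le]

lemma deriv_up (n : ℕ) (y c : Fin n → ℝ) (i : Fin n) (M b1 : ℝ) (npos : (0:ℝ) ≤ n)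
    (hbt1 : 0 < b1) (hnb1 : (n:ℝ) * b1 ≤ 1) (hble1 : b1 ≤ 1)
    (hM2 : M ≤ 1 + b1) (hyM : ∀ j, y j ≤ M) (hyl : ∀ j, -b1 ≤ y j)
    (hbound : ∀ j, j ≠ i → y j ≤ 1 - M + n * b1)
    (hcnn : ∀ j, 0 ≤ c j) (hcol : ∑ j, c j = 1) (hdiag : c i = 0) (hyi : y i = M) :
    -(1 - y i) * y i + ∑ j, c j * (1 - y j) * y j < (5 * n + 1) * b1 := by
  have hterm : ∀ j, c j * (1 - y j) * y j ≤ c j * ((1 - M) * M + 5 * n * b1) := by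
    intro j
    rcases eq_or_ne j i with rfl | hij
    · simp [hdiag]
    · have h1 : y j ≤ M := hyM j
      have h2 : -b1 ≤ y j := hyl j
      have h3 : y j ≤ 1 - M + n * b1 := hbound j hij
      have claim : (1 - y j) * y j ≤ (1 - M) * M + 5 * n * b1 := by
        rcases le_or_gt (M + y j) 1 with hc | hc
        · nlinarith [mul_nonneg (sub_nonneg.mpr h1) (by linarith : (0:ℝ) ≤ 1 - M - y j),
            mul_nonneg (mul_nonneg npos hbt1.le) (by norm_num : (0:ℝ) ≤ 5)]
        · have hp := mul_le_mul (by linarith : M - y j ≤ 3)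
            (by linarith : M + y j - 1 ≤ n * b1) (by linarith) (by norm_num)
          nlinarith [mul_nonneg npos hbt1.le]
      calc c j * (1 - y j) * y j = c j * ((1 - y j) * y j) := by ring
      _ ≤ c j * ((1 - M) * M + 5 * n * b1) := mul_le_mul_of_nonneg_left claim (hcnn j)
  have hs2 : ∑ j, c j * (1 - y j) * y j ≤ (1 - M) * M + 5 * n * b1 := by
    calc ∑ j, c j * (1 - y j) * y j ≤ ∑ j, c j * ((1 - M) * M + 5 * n * b1) :=
      Finset.sum_le_sum fun j _ => hterm j
    _ = (∑ j, c j) * ((1 - M) * M + 5 * n * b1) := by rw [Finset.sum_mul]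
    _ = (1 - M) * M + 5 * n * b1 := by rw [hcol, one_mul]
  rw [hyi]
  nlinarith [hbt1]

lemma deriv_low (n : ℕ) (y c : Fin n → ℝ) (i : Fin n) (m b1 : ℝ) (npos : (0:ℝ) ≤ n)
    (hbt1 : 0 < b1) (hnb1 : (n:ℝ) * b1 ≤ 1) (hble1 : b1 ≤ 1)
    (hm1 : m ≤ 1) (hm2 : -b1 ≤ m) (hym : ∀ j, m ≤ y j)
    (hbound : ∀ j, j ≠ i → y j ≤ 1 - m + n * b1)
    (hcnn : ∀ j, 0 ≤ c j) (hcol : ∑ j, c j = 1) (hdiag : c i = 0) (hyi : y i = m) :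
    -((5 * n + 1) * b1) < -(1 - y i) * y i + ∑ j, c j * (1 - y j) * y j := by
  have hterm : ∀ j, c j * ((1 - m) * m - 5 * n * b1) ≤ c j * (1 - y j) * y j := by
    intro j
    rcases eq_or_ne j i with rfl | hij
    · simp [hdiag]
    · have h1 : m ≤ y j := hym j
      have h3 : y j ≤ 1 - m + n * b1 := hbound j hij
      have claim : (1 - m) * m - 5 * n * b1 ≤ (1 - y j) * y j := by
        rcases le_or_gt (y j + m) 1 with hc | hc
        · nlinarith [mul_nonneg (sub_nonneg.mpr h1) (by linarith : (0:ℝ) ≤ 1 - y j - m),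
            mul_nonneg (mul_nonneg npos hbt1.le) (by norm_num : (0:ℝ) ≤ 5)]
        · have hp := mul_le_mul (by linarith : y j - m ≤ 4)
            (by linarith : y j + m - 1 ≤ n * b1) (by linarith) (by norm_num)
          nlinarith [mul_nonneg npos hbt1.le]
      calc c j * ((1 - m) * m - 5 * n * b1) ≤ c j * ((1 - y j) * y j) :=
        mul_le_mul_of_nonneg_left claim (hcnn j)
      _ = c j * (1 - y j) * y j := by ring
  have hs2 : (1 - m) * m - 5 * n * b1 ≤ ∑ j, c j * (1 - y j) * y j := by
    calc (1 - m) * m - 5 * n * b1 = (∑ j, c j) * ((1 - m) * m - 5 * n * b1) := by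
          rw [hcol, one_mul]
    _ = ∑ j, c j * ((1 - m) * m - 5 * n * b1) := by rw [Finset.sum_mul]
    _ ≤ ∑ j, c j * (1 - y j) * y j := Finset.sum_le_sum fun j _ => hterm j
  rw [hyi]
  nlinarith [hbt1]

lemma key_lemma (n : ℕ) (hn : 0 < n) (t₀ : ℝ)
    (C : ℝ → Matrix (Fin n) (Fin n) ℝ)
    (hC : ∀ t, t₀ ≤ t →
      (∀ i j, 0 ≤ C t i j) ∧ (∀ i, ∑ j, C t i j = 1) ∧
      (∀ j, ∑ i, C t i j = 1) ∧ (∀ i, C t i i = 0))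
    (x : ℝ → Fin n → ℝ)
    (hdyn : ∀ t, t₀ ≤ t → ∀ i, HasDerivAt (fun s => x s i)
      (-(1 - x t i) * x t i + ∑ j, C t j i * (1 - x t j) * x t j) t)
    (hsum : ∀ t, t₀ ≤ t → ∑ i, x t i = 1)
    (s : ℝ) (hs : t₀ ≤ s) (hnn : ∀ i, 0 ≤ x s i) (T : ℝ) (hsT : s ≤ T) :
    ∀ i, (⨅ j, x s j) ≤ x T i ∧ x T i ≤ ⨆ j, x s j := by
  classical
  haveI : Nonempty (Fin n) := ⟨⟨0, hn⟩⟩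
  have npos : (0:ℝ) < n := by exact_mod_cast hn
  have hcont : ∀ i t, t₀ ≤ t → ContinuousAt (fun u => x u i) t :=
    fun i t ht => (hdyn t ht i).continuousAt
  set l' := ⨅ j, x s j with hl'
  set h' := ⨆ j, x s j with hh'
  have bdd_above : BddAbove (Set.range fun j => x s j) := (Set.finite_range _).bddAbove
  have bdd_below : BddBelow (Set.range fun j => x s j) := (Set.finite_range _).bddBelow
  have hl0 : 0 ≤ l' := le_ciInf hnn
  have hub : ∀ j, x s j ≤ h' := fun j => le_ciSup bdd_above j
  have hlb : ∀ j, l' ≤ x s j := fun j => ciInf_le bdd_below j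
  have hh1 : h' ≤ 1 := by
    apply ciSup_le
    intro j
    calc x s j ≤ ∑ k, x s k := Finset.single_le_sum (fun k _ => hnn k) (Finset.mem_univ j)
    _ = 1 := hsum s hs
  have hlh : l' ≤ h' := (hlb ⟨0, hn⟩).trans (hub ⟨0, hn⟩)
  set A : ℝ := 5 * n + 1 with hA
  have hApos : 0 < A := by positivity
  have barrier : ∀ ε : ℝ, 0 < ε → ((n:ℝ)+1) * bar ε A s T ≤ 1 →
      ∀ i, l' - bar ε A s T ≤ x T i ∧ x T i ≤ h' + bar ε A s T := by
    intro ε hε hεsmall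
    have hbpos : ∀ u, 0 < bar ε A s u := fun u => bar_pos A s u hε
    have hbsmall : ∀ u, u ≤ T → ((n:ℝ)+1) * bar ε A s u ≤ 1 := by
      intro u hu
      have h1 := bar_mono (u := u) (v := T) (s := s) hε hApos.le hu
      nlinarith [hbpos u, npos]
    set S : Set ℝ := {u | u ∈ Icc s T ∧ ∀ v ∈ Icc s u, ∀ i,
      l' - bar ε A s v ≤ x v i ∧ x v i ≤ h' + bar ε A s v} with hSdef
    have hsS : s ∈ S := by
      refine ⟨⟨le_refl s, hsT⟩, ?_⟩
      intro v hv i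
      have hvs : v = s := le_antisymm hv.2 hv.1
      subst hvs
      exact ⟨by linarith [hlb i, hbpos v], by linarith [hub i, hbpos v]⟩
    have hSbdd : BddAbove S := ⟨T, fun u hu => hu.1.2⟩
    set t1 := sSup S with ht1def
    have hst1 : s ≤ t1 := le_csSup hSbdd hsS
    have ht1T : t1 ≤ T := csSup_le ⟨s, hsS⟩ fun u hu => hu.1.2
    have ht1t0 : t₀ ≤ t1 := hs.trans hst1
    have hIco : ∀ v ∈ Ico s t1, ∀ i, l' - bar ε A s v ≤ x v i ∧ x v i ≤ h' + bar ε A s v := by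
      intro v hv i
      obtain ⟨u, huS, hvu⟩ := exists_lt_of_lt_csSup ⟨s, hsS⟩ hv.2
      exact huS.2 v ⟨hv.1, hvu.le⟩ i
    have ht1S : t1 ∈ S := by
      refine ⟨⟨hst1, ht1T⟩, ?_⟩
      intro v hv i
      rcases lt_or_eq_of_le hv.2 with hvlt | hveq
      · exact hIco v ⟨hv.1, hvlt⟩ i
      · subst hveq
        rcases eq_or_lt_of_le hst1 with heq | hslt
        · rw [← heq]
          exact hsS.2 s ⟨le_refl s, le_refl s⟩ i
        · have hmem : Ioo s t1 ∈ 𝓝[<] t1 := Ioo_mem_nhdsLT_of_mem ⟨hslt, le_refl t1⟩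
          have hxt : Tendsto (fun u => x u i) (𝓝[<] t1) (𝓝 (x t1 i)) :=
            ((hcont i t1 ht1t0).tendsto).mono_left nhdsWithin_le_nhds
          have hbt : Tendsto (fun u => bar ε A s u) (𝓝[<] t1) (𝓝 (bar ε A s t1)) :=
            ((bar_cont ε A s).tendsto t1).mono_left nhdsWithin_le_nhds
          constructor
          · refine le_of_tendsto_of_tendsto (tendsto_const_nhds.sub hbt) hxt ?_
            filter_upwards [hmem] with u hu
            exact (hIco u ⟨hu.1.le, hu.2⟩ i).1
          · refine le_of_tendsto_of_tendsto hxt (tendsto_const_nhds.add hbt) ?_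
            filter_upwards [hmem] with u hu
            exact (hIco u ⟨hu.1.le, hu.2⟩ i).2
    rcases eq_or_lt_of_le ht1T with heq | ht1lt
    · intro i
      have := ht1S.2 t1 ⟨hst1, le_refl t1⟩ i
      rw [heq] at this
      exact this
    · exfalso
      obtain ⟨hCnn, hrow, hcol, hdiag⟩ := hC t1 ht1t0
      have hsum1 : ∑ k, x t1 k = 1 := hsum t1 ht1t0
      have hbd : ∀ j, l' - bar ε A s t1 ≤ x t1 j ∧ x t1 j ≤ h' + bar ε A s t1 :=
        fun j => ht1S.2 t1 ⟨hst1, le_refl t1⟩ j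
      have hb1 : ((n:ℝ)+1) * bar ε A s t1 ≤ 1 := hbsmall t1 ht1T
      have hbt1 : 0 < bar ε A s t1 := hbpos t1
      have hnb1 : (n:ℝ) * bar ε A s t1 ≤ 1 := by linarith
      have hb_le1 : bar ε A s t1 ≤ 1 := by nlinarith
      have hsum_bound : ∀ i j, j ≠ i → x t1 j ≤ 1 - x t1 i + n * bar ε A s t1 :=
        aux_sum_bound n (fun k => x t1 k) l' (bar ε A s t1) hl0 hbt1 hsum1
          (fun j => (hbd j).1)
      have main : ∀ i, ∀ᶠ u in 𝓝[>] t1,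
          l' - bar ε A s u < x u i ∧ x u i < h' + bar ε A s u := by
        intro i
        have hxd := hdyn t1 ht1t0 i
        have hup : ∀ᶠ u in 𝓝[>] t1, x u i < h' + bar ε A s u := by
          rcases lt_or_eq_of_le (hbd i).2 with hlt | heq
          · have hten : Tendsto (fun u => x u i - (h' + bar ε A s u)) (𝓝 t1)
                (𝓝 (x t1 i - (h' + bar ε A s t1))) :=
              ((hcont i t1 ht1t0).tendsto).sub
                (tendsto_const_nhds.add ((bar_cont ε A s).tendsto t1))
            have h5 := hten.eventually_lt_const
              (by linarith : x t1 i - (h' + bar ε A s t1) < 0)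
            refine (h5.filter_mono nhdsWithin_le_nhds).mono fun u hu => ?_
            linarith
          · have hDlt : -(1 - x t1 i) * x t1 i + ∑ j, C t1 j i * (1 - x t1 j) * x t1 j
                < A * bar ε A s t1 := by
              rw [hA]
              have := deriv_up n (fun j => x t1 j) (fun j => C t1 j i) i
                (h' + bar ε A s t1) (bar ε A s t1) npos.le hbt1 hnb1 hb_le1
                (by linarith) (fun j => (hbd j).2)
                (fun j => by linarith [(hbd j).1, hl0])
                (fun j hij => by
                  have h7 := hsum_bound i j hij
                  rw [heq] at h7
                  linarith)
                (fun j => hCnn j i) (hcol i) (hdiag i) heq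
              linarith [this]
            have hf : HasDerivAt (fun u => x u i - (h' + bar ε A s u))
                ((-(1 - x t1 i) * x t1 i + ∑ j, C t1 j i * (1 - x t1 j) * x t1 j)
                  - A * bar ε A s t1) t1 :=
              hxd.sub ((bar_deriv ε A s t1).const_add h')
            have hev := aux_right_neg hf (by linarith) (by simp [heq])
            refine hev.mono fun u hu => ?_
            linarith
        have hlow : ∀ᶠ u in 𝓝[>] t1, l' - bar ε A s u < x u i := by
          rcases lt_or_eq_of_le (hbd i).1 with hlt | heq
          · have hten : Tendsto (fun u => (l' - bar ε A s u) - x u i) (𝓝 t1)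
                (𝓝 ((l' - bar ε A s t1) - x t1 i)) :=
              (tendsto_const_nhds.sub ((bar_cont ε A s).tendsto t1)).sub
                ((hcont i t1 ht1t0).tendsto)
            have h5 := hten.eventually_lt_const
              (by linarith : (l' - bar ε A s t1) - x t1 i < 0)
            refine (h5.filter_mono nhdsWithin_le_nhds).mono fun u hu => ?_
            linarith
          · have hDgt : -(A * bar ε A s t1)
                < -(1 - x t1 i) * x t1 i + ∑ j, C t1 j i * (1 - x t1 j) * x t1 j := by
              rw [hA]
              have := deriv_low n (fun j => x t1 j) (fun j => C t1 j i) i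
                (l' - bar ε A s t1) (bar ε A s t1) npos.le hbt1 hnb1 hb_le1
                (by linarith) (by linarith) (fun j => (hbd j).1)
                (fun j hij => by
                  have h7 := hsum_bound i j hij
                  rw [← heq] at h7
                  linarith)
                (fun j => hCnn j i) (hcol i) (hdiag i) heq.symm
              linarith [this]
            have hf : HasDerivAt (fun u => (l' - bar ε A s u) - x u i)
                ((-(A * bar ε A s t1))
                  - (-(1 - x t1 i) * x t1 i + ∑ j, C t1 j i * (1 - x t1 j) * x t1 j)) t1 :=
              ((bar_deriv ε A s t1).const_sub l').sub hxd
            have hev := aux_right_neg hf (by linarith) (by simp [← heq])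
            refine hev.mono fun u hu => ?_
            linarith
        exact hlow.and hup
      have hall : ∀ᶠ u in 𝓝[>] t1,
          (∀ i, l' - bar ε A s u < x u i ∧ x u i < h' + bar ε A s u) ∧ u ≤ T := by
        refine (eventually_all.mpr main).and ?_
        filter_upwards [Ioc_mem_nhdsGT_of_mem
          (⟨le_refl t1, ht1lt⟩ : t1 ∈ Ico t1 T)] with u hu
        exact hu.2
      obtain ⟨c, hc, hsub⟩ := mem_nhdsGT_iff_exists_Ioc_subset.mp hall
      have hcT : c ≤ T := (hsub ⟨hc, le_refl c⟩).2
      have hcS : c ∈ S := by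
        refine ⟨⟨hst1.trans (le_of_lt hc), hcT⟩, ?_⟩
        intro v hv i
        rcases le_or_gt v t1 with hvle | hvgt
        · exact ht1S.2 v ⟨hv.1, hvle⟩ i
        · have h8 := (hsub ⟨hvgt, hv.2⟩).1 i
          exact ⟨h8.1.le, h8.2.le⟩
      exact absurd (le_csSup hSbdd hcS) (not_le.mpr hc)
  -- ε → 0
  intro i
  have hEpos : 0 < Real.exp (A * (T - s)) := Real.exp_pos _
  have hbound : ∀ δ : ℝ, 0 < δ → l' - δ ≤ x T i ∧ x T i ≤ h' + δ := by
    intro δ hδ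
    set E := Real.exp (A * (T - s)) with hE
    set ε := min (δ / E) (1 / (((n:ℝ)+1) * E)) with hεdef
    have hεpos : 0 < ε := lt_min (div_pos hδ hEpos) (by positivity)
    have hbarT : bar ε A s T = ε * E := rfl
    have h1 : ((n:ℝ)+1) * bar ε A s T ≤ 1 := by
      rw [hbarT]
      have h6 : ε ≤ 1 / (((n:ℝ)+1) * E) := min_le_right _ _
      have h7 : (0:ℝ) < ((n:ℝ)+1) * E := by positivity
      calc ((n:ℝ)+1) * (ε * E) ≤ ((n:ℝ)+1) * ((1 / (((n:ℝ)+1) * E)) * E) := by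
            apply mul_le_mul_of_nonneg_left
              (mul_le_mul_of_nonneg_right h6 hEpos.le) (by positivity)
      _ = 1 := by field_simp
    have h2 : bar ε A s T ≤ δ := by
      rw [hbarT]
      have h6 : ε ≤ δ / E := min_le_left _ _
      calc ε * E ≤ (δ / E) * E := mul_le_mul_of_nonneg_right h6 hEpos.le
      _ = δ := by field_simp
    obtain ⟨hlow, hup⟩ := barrier ε hεpos h1 i
    have hbp : 0 < bar ε A s T := bar_pos A s T hεpos
    exact ⟨by linarith, by linarith⟩
  constructor
  · by_contra hcon
    push_neg at hcon
    have := (hbound ((l' - x T i) / 2) (by linarith)).1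
    linarith
  · by_contra hcon
    push_neg at hcon
    have := (hbound ((x T i - h') / 2) (by linarith)).2
    linarith

/-- Under the self-appraisal dynamics with doubly stochastic C(t) and
x(t₀) ∈ Δₙ, the maximum h(t) = maxᵢ xᵢ(t) is nonincreasing and the minimum
l(t) = minᵢ xᵢ(t) is nondecreasing in t. -/
theorem max_nonincreasing_min_nondecreasing (n : ℕ) (hn : 0 < n) (t₀ : ℝ)
    (C : ℝ → Matrix (Fin n) (Fin n) ℝ)
    (hC : ∀ t, t₀ ≤ t →
      (∀ i j, 0 ≤ C t i j) ∧ (∀ i, ∑ j, C t i j = 1) ∧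
      (∀ j, ∑ i, C t i j = 1) ∧ (∀ i, C t i i = 0))
    (x : ℝ → Fin n → ℝ)
    (hdyn : ∀ t, t₀ ≤ t → ∀ i, HasDerivAt (fun s => x s i)
      (-(1 - x t i) * x t i + ∑ j, C t j i * (1 - x t j) * x t j) t)
    (hx0 : (∀ i, 0 ≤ x t₀ i) ∧ ∑ i, x t₀ i = 1) :
    ∀ s t : ℝ, t₀ ≤ s → s ≤ t →
      (⨆ i, x t i) ≤ (⨆ i, x s i) ∧ (⨅ i, x s i) ≤ (⨅ i, x t i) := by
  classical
  haveI : Nonempty (Fin n) := ⟨⟨0, hn⟩⟩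
  obtain ⟨hx0nn, hx0sum⟩ := hx0
  have hsum : ∀ t, t₀ ≤ t → ∑ i, x t i = 1 := by
    intro t ht
    have hcont' : ContinuousOn (fun v => ∑ i, x v i) (Icc t₀ t) := by
      intro u hu
      exact (HasDerivAt.fun_sum (fun i _ => hdyn u hu.1 i)).continuousAt.continuousWithinAt
    have hder : ∀ u ∈ Ico t₀ t, HasDerivWithinAt (fun v => ∑ i, x v i) 0 (Ici u) u := by
      intro u hu
      have hD := HasDerivAt.fun_sum (fun i (_ : i ∈ Finset.univ) => hdyn u hu.1 i)
      obtain ⟨hnn, hrow, hcol, hdiag⟩ := hC u hu.1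
      have hswap : ∑ i, ∑ j, C u j i * (1 - x u j) * x u j = ∑ j, (1 - x u j) * x u j := by
        rw [Finset.sum_comm]
        refine Finset.sum_congr rfl fun j _ => ?_
        rw [← Finset.sum_mul, ← Finset.sum_mul, hrow j, one_mul]
      have hzero : ∑ i, (-(1 - x u i) * x u i + ∑ j, C u j i * (1 - x u j) * x u j) = 0 := by
        rw [Finset.sum_add_distrib, hswap]
        have h9 : ∑ i, -(1 - x u i) * x u i = -∑ i, (1 - x u i) * x u i := by
          rw [← Finset.sum_neg_distrib]
          exact Finset.sum_congr rfl fun i _ => by ring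
        rw [h9, neg_add_cancel]
      rw [hzero] at hD
      exact hD.hasDerivWithinAt
    have := constant_of_has_deriv_right_zero hcont' hder t (right_mem_Icc.mpr ht)
    simpa [hx0sum] using this
  intro s t hs hst
  have hl0' : 0 ≤ ⨅ j, x t₀ j := le_ciInf hx0nn
  have hnns : ∀ i, 0 ≤ x s i := fun i =>
    hl0'.trans (key_lemma n hn t₀ C hC x hdyn hsum t₀ le_rfl hx0nn s hs i).1
  constructor
  · exact ciSup_le fun i => (key_lemma n hn t₀ C hC x hdyn hsum s hs hnns t hst i).2
  · exact le_ciInf fun i => (key_lemma n hn t₀ C hC x hdyn hsum s hs hnns t hst i).1
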